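/- Every 2-edge-connected multigraph α with at least 2 vertices and a distinguished root vertex contains a path π = (u_1, ..., u_k) with k ≥ 2 such that: each internal vertex u_2, ..., u_{k-1} has degree 2 in α; no internal vertex equals the root; the vertices u_1, ..., u_k are pairwise distinct except possibly u_1 = u_k; and removing the internal vertices and edges of π from α leaves a 2-edge-connected graph. -/

import Mathlib

/-- A finite multigraph: finite types of vertices and edges and an endpoint map.
Loops and parallel edges are allowed. -/
structure Multigraph where
  V : Type
  E : Type
  [fintypeV : Fintype V]
  [fintypeE : Fintype E]
  [decV : DecidableEq V]
  ends : E → V × V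

attribute [instance] Multigraph.fintypeV Multigraph.fintypeE Multigraph.decV

namespace Multigraph

/-- The degree of a vertex; a self-loop contributes 2. -/
def degree (G : Multigraph) (v : G.V) : ℕ :=
  ∑ e : G.E,
    (if G.ends e = (v, v) then 2
     else if (G.ends e).1 = v ∨ (G.ends e).2 = v then 1 else 0)

/-- Reachability using only edges in the set `S`. -/
def ReachableOn (G : Multigraph) (S : Set G.E) : G.V → G.V → Prop :=
  Relation.ReflTransGen (fun x y => ∃ e ∈ S, G.ends e = (x, y) ∨ G.ends e = (y, x))

/-- The subgraph on the vertex set `VS` with edge set `ES` is 2-edge-connected: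
all edges of `ES` join vertices of `VS`, any two vertices of `VS` are joined by a
walk in `ES`, and no edge of `ES` is a bridge of this subgraph. -/
def TwoEdgeConnectedOn (G : Multigraph) (VS : Set G.V) (ES : Set G.E) : Prop :=
  (∀ e ∈ ES, (G.ends e).1 ∈ VS ∧ (G.ends e).2 ∈ VS) ∧
  (∀ x ∈ VS, ∀ y ∈ VS, G.ReachableOn ES x y) ∧
  (∀ e ∈ ES, G.ReachableOn (ES \ {e}) (G.ends e).1 (G.ends e).2)

/-- The whole multigraph is 2-edge-connected. -/
def TwoEdgeConnected (G : Multigraph) : Prop :=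
  G.TwoEdgeConnectedOn Set.univ Set.univ

end Multigraph

namespace Multigraph

variable (G : Multigraph)

/-- A walk from `x` given by steps `(edge, next vertex)`. -/
def WalkFrom (S : Set G.E) : G.V → List (G.E × G.V) → Prop
  | _, [] => True
  | x, p :: l => (p.1 ∈ S ∧ (G.ends p.1 = (x, p.2) ∨ G.ends p.1 = (p.2, x))) ∧ WalkFrom S p.2 l

/-- End vertex of a walk. -/
def endv (x : G.V) (l : List (G.E × G.V)) : G.V := (l.map Prod.snd).getLastD x

variable {G}

@[simp] lemma endv_nil (x : G.V) : G.endv x [] = x := rfl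

@[simp] lemma endv_cons (x : G.V) (p : G.E × G.V) (l : List (G.E × G.V)) :
    G.endv x (p :: l) = G.endv p.2 l := by
  show (p.2 :: l.map Prod.snd).getLastD x = _
  rw [List.getLastD_cons]; rfl

@[simp] lemma walkFrom_nil (S : Set G.E) (x : G.V) : G.WalkFrom S x [] := trivial

lemma walkFrom_cons {S : Set G.E} {x : G.V} {p : G.E × G.V} {l : List (G.E × G.V)} :
    G.WalkFrom S x (p :: l) ↔
      (p.1 ∈ S ∧ (G.ends p.1 = (x, p.2) ∨ G.ends p.1 = (p.2, x))) ∧ G.WalkFrom S p.2 l :=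
  Iff.rfl

lemma endv_append (x : G.V) (l1 l2 : List (G.E × G.V)) :
    G.endv x (l1 ++ l2) = G.endv (G.endv x l1) l2 := by
  induction l1 generalizing x with
  | nil => simp
  | cons p t ih => simp [ih]

lemma walkFrom_append {S : Set G.E} {x : G.V} {l1 l2 : List (G.E × G.V)} :
    G.WalkFrom S x (l1 ++ l2) ↔ G.WalkFrom S x l1 ∧ G.WalkFrom S (G.endv x l1) l2 := by
  induction l1 generalizing x with
  | nil => simp
  | cons p t ih => simp [walkFrom_cons, ih, and_assoc]

lemma walkFrom_mono {S T : Set G.E} (hST : S ⊆ T) {x : G.V} {l : List (G.E × G.V)}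
    (h : G.WalkFrom S x l) : G.WalkFrom T x l := by
  induction l generalizing x with
  | nil => trivial
  | cons p t ih => exact ⟨⟨hST h.1.1, h.1.2⟩, ih h.2⟩

lemma reachableOn_mono {S T : Set G.E} (hST : S ⊆ T) {x y : G.V}
    (h : G.ReachableOn S x y) : G.ReachableOn T x y := by
  refine Relation.ReflTransGen.mono ?_ _ _ h
  rintro a b ⟨e, he, h⟩
  exact ⟨e, hST he, h⟩

lemma reachableOn_symm {S : Set G.E} {x y : G.V} (h : G.ReachableOn S x y) :
    G.ReachableOn S y x := by
  refine (@Relation.ReflTransGen.stdSymm _ _ ⟨?_⟩).symm _ _ h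
  rintro a b ⟨e, he, h | h⟩
  exacts [⟨e, he, Or.inr h⟩, ⟨e, he, Or.inl h⟩]

lemma reachableOn_trans {S : Set G.E} {x y z : G.V} (h1 : G.ReachableOn S x y)
    (h2 : G.ReachableOn S y z) : G.ReachableOn S x z :=
  Relation.ReflTransGen.trans h1 h2

lemma reachableOn_iff_walk {S : Set G.E} {x y : G.V} :
    G.ReachableOn S x y ↔ ∃ l, G.WalkFrom S x l ∧ G.endv x l = y := by
  constructor
  · intro h
    induction h with
    | refl => exact ⟨[], trivial, rfl⟩
    | tail _ hstep ih =>
      obtain ⟨l, hw, he⟩ := ih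
      obtain ⟨e, heS, hse⟩ := hstep
      rename_i b c _
      refine ⟨l ++ [(e, c)], ?_, ?_⟩
      · rw [walkFrom_append]
        exact ⟨hw, ⟨⟨heS, by rw [he]; exact hse⟩, trivial⟩⟩
      · rw [endv_append]; simp
  · rintro ⟨l, hw, he⟩
    subst he
    induction l generalizing x with
    | nil => exact Relation.ReflTransGen.refl
    | cons p t ih =>
      rw [endv_cons]
      exact Relation.ReflTransGen.head ⟨p.1, hw.1.1, hw.1.2⟩ (ih hw.2)


lemma endv_getElem (l : List (G.E × G.V)) (x : G.V) :
    G.endv x l = (x :: l.map Prod.snd)[l.length]'(by simp) := by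
  induction l generalizing x with
  | nil => simp
  | cons p t ih => simp [ih p.2]

lemma walk_getElem {S : Set G.E} : ∀ (l : List (G.E × G.V)) (a : G.V), G.WalkFrom S a l →
    ∀ (i : ℕ) (h : i < l.length),
    l[i].1 ∈ S ∧ ((a :: l.map Prod.snd)[i+1]'(by simp; omega) = l[i].2) ∧
    (G.ends l[i].1 = ((a :: l.map Prod.snd)[i]'(by simp; omega), l[i].2) ∨
     G.ends l[i].1 = (l[i].2, (a :: l.map Prod.snd)[i]'(by simp; omega))) := by
  intro l
  induction l with
  | nil => intro a _ i h; simp at h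
  | cons p t ih =>
    intro a hw i h
    match i with
    | 0 => simpa using ⟨hw.1.1, hw.1.2⟩
    | (j+1) =>
      have := ih p.2 hw.2 j (by simpa using h)
      simpa using this

lemma walk_vertex_mem {S : Set G.E} : ∀ (l : List (G.E × G.V)) (a : G.V), G.WalkFrom S a l →
    ∀ p ∈ l, (G.ends p.1).1 ∈ a :: l.map Prod.snd ∧ (G.ends p.1).2 ∈ a :: l.map Prod.snd := by
  intro l
  induction l with
  | nil => intro a _ p hp; simp at hp
  | cons q t ih =>
    intro a hw p hp
    rcases List.mem_cons.1 hp with rfl | hp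
    · rcases hw.1.2 with h | h <;> rw [h] <;> simp
    · have := ih q.2 hw.2 p hp
      constructor
      · rcases List.mem_cons.1 this.1 with h | h
        · rw [h]; simp
        · simp only [List.map_cons, List.mem_cons]; right; right; simpa using h
      · rcases List.mem_cons.1 this.2 with h | h
        · rw [h]; simp
        · simp only [List.map_cons, List.mem_cons]; right; right; simpa using h

/-- Along a walk, every vertex is reachable from the start using only walk edges. -/
lemma walk_reach {S : Set G.E} : ∀ (l : List (G.E × G.V)) (a : G.V), G.WalkFrom S a l →
    ∀ v ∈ a :: l.map Prod.snd, G.ReachableOn {f | f ∈ l.map Prod.fst} a v := by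
  intro l
  induction l with
  | nil => intro a _ v hv; simp at hv; subst hv; exact Relation.ReflTransGen.refl
  | cons p t ih =>
    intro a hw v hv
    rcases List.mem_cons.1 hv with rfl | hv
    · exact Relation.ReflTransGen.refl
    · have hstep : G.ReachableOn {f | f ∈ (p :: t).map Prod.fst} a p.2 :=
        Relation.ReflTransGen.single ⟨p.1, by simp, hw.1.2⟩
      rcases List.mem_cons.1 hv with rfl | hv
      · exact hstep
      · refine hstep.trans (reachableOn_mono ?_ (ih p.2 hw.2 v (by simp [hv])))
        intro f hf; simp at hf ⊢; exact Or.inr hf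

/-- A walk whose vertices are distinct uses distinct edges. -/
lemma walk_edges_nodup {S : Set G.E} : ∀ (l : List (G.E × G.V)) (a : G.V), G.WalkFrom S a l →
    (a :: l.map Prod.snd).Nodup → (l.map Prod.fst).Nodup := by
  intro l
  induction l with
  | nil => intro a _ _; simp
  | cons p t ih =>
    intro a hw hnd
    simp only [List.map_cons, List.nodup_cons] at hnd ⊢
    refine ⟨?_, ih p.2 hw.2 (by simpa using hnd.2)⟩
    intro hmem
    obtain ⟨q, hq, hq1⟩ := List.mem_map.1 hmem
    have hxmem := walk_vertex_mem t p.2 hw.2 q hq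
    have hx : (G.ends p.1).1 = a ∨ (G.ends p.1).2 = a := by
      rcases hw.1.2 with h | h <;> rw [h] <;> simp
    have ha : a ∈ p.2 :: t.map Prod.snd := by
      rcases hx with h | h
      · rw [hq1] at hxmem; rw [← h]; exact hxmem.1
      · rw [hq1] at hxmem; rw [← h]; exact hxmem.2
    exact hnd.1 (by simpa using ha)


/-- Truncate a walk at the first vertex lying in `VS`. -/
lemma walk_truncate {S : Set G.E} {VS : Set G.V} : ∀ (l : List (G.E × G.V)) (x : G.V),
    G.WalkFrom S x l → G.endv x l ∈ VS →
    ∃ l', G.WalkFrom S x l' ∧ G.endv x l' ∈ VS ∧ (∀ p ∈ l', p ∈ l) ∧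
      ∀ v ∈ (x :: l'.map Prod.snd).dropLast, v ∉ VS := by
  intro l
  induction l with
  | nil =>
    intro x _ hend
    exact ⟨[], trivial, hend, by simp, by simp⟩
  | cons p t ih =>
    intro x hw hend
    by_cases hx : x ∈ VS
    · exact ⟨[], trivial, hx, by simp, by simp⟩
    · obtain ⟨t', h1, h2, h3, h4⟩ := ih p.2 hw.2 (by simpa using hend)
      refine ⟨p :: t', ⟨hw.1, h1⟩, by simpa using h2, ?_, ?_⟩
      · intro q hq
        rcases List.mem_cons.1 hq with rfl | hq
        · simp
        · exact List.mem_cons.2 (Or.inr (h3 q hq))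
      · intro v hv
        simp only [List.map_cons, List.dropLast_cons₂, List.mem_cons] at hv
        rcases hv with rfl | hv
        · exact hx
        · exact h4 v (by simpa using hv)

/-- Erase loops from a walk so all its vertices are distinct. -/
lemma walk_erase {S : Set G.E} : ∀ (n : ℕ) (l : List (G.E × G.V)) (x : G.V), l.length ≤ n →
    G.WalkFrom S x l →
    ∃ l', G.WalkFrom S x l' ∧ G.endv x l' = G.endv x l ∧ (∀ p ∈ l', p ∈ l) ∧
      (x :: l'.map Prod.snd).Nodup := by
  intro n
  induction n with
  | zero =>
    intro l x hl _
    have : l = [] := List.length_eq_zero_iff.1 (Nat.le_zero.1 hl)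
    subst this
    exact ⟨[], trivial, rfl, by simp, by simp⟩
  | succ n ih =>
    intro l x hl hw
    by_cases hx : x ∈ l.map Prod.snd
    · obtain ⟨p, hp, hp2⟩ := List.mem_map.1 hx
      obtain ⟨l1, l2, rfl⟩ := List.append_of_mem hp
      have hregroup : l1 ++ p :: l2 = (l1 ++ [p]) ++ l2 := by simp
      rw [hregroup] at hw hl ⊢
      have hmid : G.endv x (l1 ++ [p]) = x := by
        rw [endv_append]; simpa using hp2
      have hw2 : G.WalkFrom S x l2 := by
        have := (walkFrom_append.1 hw).2
        rwa [hmid] at this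
      have hlen : l2.length ≤ n := by
        simp at hl; omega
      obtain ⟨l', h1, h2, h3, h4⟩ := ih l2 x hlen hw2
      refine ⟨l', h1, ?_, ?_, h4⟩
      · rw [endv_append, hmid, h2]
      · intro q hq; simp [h3 q hq]
    · match l with
      | [] => exact ⟨[], trivial, rfl, by simp, by simp⟩
      | p :: t =>
        obtain ⟨t', h1, h2, h3, h4⟩ := ih t p.2 (by simpa using hl) hw.2
        refine ⟨p :: t', ⟨hw.1, h1⟩, by simpa using h2, ?_, ?_⟩
        · intro q hq
          rcases List.mem_cons.1 hq with rfl | hq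
          · simp
          · exact List.mem_cons.2 (Or.inr (h3 q hq))
        · simp only [List.map_cons, List.nodup_cons] at h4 ⊢
          refine ⟨?_, h4⟩
          intro hmem
          apply hx
          rcases List.mem_cons.1 hmem with rfl | hmem
          · simp
          · obtain ⟨q, hq, hq2⟩ := List.mem_map.1 hmem
            exact List.mem_map.2 ⟨q, by simp [h3 q hq], hq2⟩


lemma endv_eq_getLast (l : List (G.E × G.V)) (x : G.V) :
    G.endv x l = (x :: l.map Prod.snd).getLast (by simp) := by
  rw [endv_getElem, List.getLast_eq_getElem]
  simp

/-- A walk can be refined into a "provisional ear": it ends at the first vertex of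
`VS` it meets, all its vertices are distinct, and all vertices before the end
avoid `VS`. -/
lemma ear_walk {S : Set G.E} {VS : Set G.V} (l : List (G.E × G.V)) (x : G.V)
    (hw : G.WalkFrom S x l) (hend : G.endv x l ∈ VS) :
    ∃ l', G.WalkFrom S x l' ∧ G.endv x l' ∈ VS ∧ (∀ p ∈ l', p ∈ l) ∧
      (x :: l'.map Prod.snd).Nodup ∧ ∀ v ∈ (x :: l'.map Prod.snd).dropLast, v ∉ VS := by
  obtain ⟨l1, hw1, hend1, hsub1, hnv1⟩ := walk_truncate l x hw hend
  obtain ⟨l', hw', hend', hsub', hnd⟩ := walk_erase l1.length l1 x le_rfl hw1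
  refine ⟨l', hw', hend' ▸ hend1, fun p hp => hsub1 p (hsub' p hp), hnd, ?_⟩
  have hkey : ∀ v ∈ x :: l1.map Prod.snd, v ∉ VS ∨ v = G.endv x l1 := by
    intro v hv
    rw [endv_eq_getLast]
    have heq := List.dropLast_concat_getLast (l := x :: l1.map Prod.snd) (by simp)
    rw [← heq] at hv
    rcases List.mem_append.1 hv with h | h
    · exact Or.inl (hnv1 v h)
    · exact Or.inr (by simpa using h)
  intro v hv
  have hvfull : v ∈ x :: l'.map Prod.snd := (List.dropLast_sublist _).subset hv
  have hv1 : v ∈ x :: l1.map Prod.snd := by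
    rcases List.mem_cons.1 hvfull with rfl | h
    · simp
    · obtain ⟨q, hq, hq2⟩ := List.mem_map.1 h
      exact List.mem_cons.2 (Or.inr (List.mem_map.2 ⟨q, hsub' q hq, hq2⟩))
  rcases hkey v hv1 with h | rfl
  · exact h
  · exfalso
    have heq2 := List.dropLast_concat_getLast (l := x :: l'.map Prod.snd) (by simp)
    have hd := List.disjoint_of_nodup_append (l₁ := (x :: l'.map Prod.snd).dropLast)
      (l₂ := [(x :: l'.map Prod.snd).getLast (by simp)]) (by rw [heq2]; exact hnd)
    have he2 := endv_eq_getLast (G := G) l' x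
    rw [hend'] at he2
    have hv2 : (x :: l'.map Prod.snd).getLast (by simp) ∈ (x :: l'.map Prod.snd).dropLast := by
      rw [← he2]; exact hv
    exact hd hv2 (by simp)


lemma endv_mem (l : List (G.E × G.V)) (x : G.V) : G.endv x l ∈ x :: l.map Prod.snd := by
  rw [endv_getElem]
  exact List.getElem_mem _

/-- Adding a walk ("ear") with endpoints in `VS`, new distinct edges, preserves
2-edge-connectivity. -/
lemma extend_ear {VS : Set G.V} {ES : Set G.E} (h : G.TwoEdgeConnectedOn VS ES)
    (a : G.V) (ha : a ∈ VS) (L : List (G.E × G.V)) (hwL : G.WalkFrom Set.univ a L)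
    (hendL : G.endv a L ∈ VS) (hnotES : ∀ p ∈ L, p.1 ∉ ES)
    (hEnd : (L.map Prod.fst).Nodup) :
    G.TwoEdgeConnectedOn (VS ∪ {v | v ∈ L.map Prod.snd}) (ES ∪ {f | f ∈ L.map Prod.fst}) := by
  obtain ⟨h1, h2, h3⟩ := h
  have hreach_a : ∀ x ∈ VS ∪ {v | v ∈ L.map Prod.snd},
      G.ReachableOn (ES ∪ {f | f ∈ L.map Prod.fst}) a x := by
    intro x hx
    rcases hx with hx | hx
    · exact reachableOn_mono (Set.subset_union_left) (h2 a ha x hx)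
    · exact reachableOn_mono (Set.subset_union_right)
        (walk_reach L a hwL x (List.mem_cons.2 (Or.inr hx)))
  refine ⟨?_, ?_, ?_⟩
  · intro f hf
    rcases hf with hf | hf
    · exact ⟨Or.inl (h1 f hf).1, Or.inl (h1 f hf).2⟩
    · obtain ⟨p, hp, rfl⟩ := List.mem_map.1 hf
      have := walk_vertex_mem L a hwL p hp
      constructor
      · rcases List.mem_cons.1 this.1 with hq | hq
        · rw [hq]; exact Or.inl ha
        · exact Or.inr hq
      · rcases List.mem_cons.1 this.2 with hq | hq
        · rw [hq]; exact Or.inl ha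
        · exact Or.inr hq
  · intro x hx y hy
    exact (reachableOn_symm (hreach_a x hx)).trans (hreach_a y hy)
  · intro f hf
    rcases hf with hf | hf
    · refine reachableOn_mono ?_ (h3 f hf)
      intro s hs
      exact ⟨Or.inl hs.1, hs.2⟩
    · obtain ⟨p, hp, rfl⟩ := List.mem_map.1 hf
      obtain ⟨L1, L2, rfl⟩ := List.append_of_mem hp
      set w := G.endv a L1 with hw_def
      have hsplit := walkFrom_append.1 hwL
      have hstep := hsplit.2.1
      have hw2 : G.WalkFrom Set.univ p.2 L2 := hsplit.2.2
      have hfnodup : p.1 ∉ (L1.map Prod.fst) ∧ p.1 ∉ (L2.map Prod.fst) := by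
        have : (L1.map Prod.fst ++ p.1 :: L2.map Prod.fst).Nodup := by simpa using hEnd
        obtain ⟨hn1, hn2, hdisj⟩ := List.nodup_append.1 this
        exact ⟨fun hmem => hdisj _ hmem _ (by simp) rfl, (List.nodup_cons.1 hn2).1⟩
      have hsub1 : {f | f ∈ L1.map Prod.fst} ⊆
          (ES ∪ {f | f ∈ (L1 ++ p :: L2).map Prod.fst}) \ {p.1} := by
        intro s hs
        refine ⟨Or.inr (by simp only [List.map_append, List.map_cons]; exact
          List.mem_append.2 (Or.inl hs)), ?_⟩
        intro hsp
        exact hfnodup.1 (Set.mem_singleton_iff.1 hsp ▸ hs)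
      have hsub2 : {f | f ∈ L2.map Prod.fst} ⊆
          (ES ∪ {f | f ∈ (L1 ++ p :: L2).map Prod.fst}) \ {p.1} := by
        intro s hs
        refine ⟨Or.inr (by simp only [List.map_append, List.map_cons]; exact
          List.mem_append.2 (Or.inr (List.mem_cons.2 (Or.inr hs)))), ?_⟩
        intro hsp
        exact hfnodup.2 (Set.mem_singleton_iff.1 hsp ▸ hs)
      have hsubES : ES ⊆ (ES ∪ {f | f ∈ (L1 ++ p :: L2).map Prod.fst}) \ {p.1} := by
        intro s hs
        refine ⟨Or.inl hs, fun hsp => hnotES p (by simp) (Set.mem_singleton_iff.1 hsp ▸ hs)⟩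
      -- w reaches a via L1 edges
      have hra : G.ReachableOn ((ES ∪ {f | f ∈ (L1 ++ p :: L2).map Prod.fst}) \ {p.1}) w a :=
        reachableOn_symm (reachableOn_mono hsub1 (walk_reach L1 a hsplit.1 w (endv_mem L1 a)))
      -- a reaches the end of the whole walk via ES
      have hy : G.endv a (L1 ++ p :: L2) = G.endv p.2 L2 := by
        rw [endv_append]; simp
      have hay : G.ReachableOn ((ES ∪ {f | f ∈ (L1 ++ p :: L2).map Prod.fst}) \ {p.1})
          a (G.endv p.2 L2) :=
        reachableOn_mono hsubES (h2 a ha _ (hy ▸ hendL))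
      -- end of walk reaches p.2 via L2 edges
      have hyp2 : G.ReachableOn ((ES ∪ {f | f ∈ (L1 ++ p :: L2).map Prod.fst}) \ {p.1})
          (G.endv p.2 L2) p.2 :=
        reachableOn_symm (reachableOn_mono hsub2 (walk_reach L2 p.2 hw2 _ (endv_mem L2 p.2)))
      have hwp2 : G.ReachableOn ((ES ∪ {f | f ∈ (L1 ++ p :: L2).map Prod.fst}) \ {p.1}) w p.2 :=
        (hra.trans hay).trans hyp2
      rcases hstep.2 with hends | hends
      · rw [hends]
        exact hwp2
      · rw [hends]
        exact reachableOn_symm hwp2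


lemma walk_edges_mem {S : Set G.E} : ∀ (l : List (G.E × G.V)) (x : G.V),
    G.WalkFrom S x l → ∀ p ∈ l, p.1 ∈ S := by
  intro l
  induction l with
  | nil => intro x _ p hp; simp at hp
  | cons q t ih =>
    intro x hw p hp
    rcases List.mem_cons.1 hp with rfl | hp
    · exact hw.1.1
    · exact ih q.2 hw.2 p hp

lemma walk_edges_notES {S : Set G.E} {VS : Set G.V} {ES : Set G.E}
    (h1 : ∀ e ∈ ES, (G.ends e).1 ∈ VS ∧ (G.ends e).2 ∈ VS) :
    ∀ (l : List (G.E × G.V)) (x : G.V), G.WalkFrom S x l →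
    (∀ v ∈ (x :: l.map Prod.snd).dropLast, v ∉ VS) → ∀ p ∈ l, p.1 ∉ ES := by
  intro l
  induction l with
  | nil => intro x _ _ p hp; simp at hp
  | cons q t ih =>
    intro x hw hnv p hp
    have hxnot : x ∉ VS := hnv x (by simp)
    rcases List.mem_cons.1 hp with rfl | hp
    · intro hmem
      have := h1 p.1 hmem
      rcases hw.1.2 with h | h <;> rw [h] at this
      · exact hxnot this.1
      · exact hxnot this.2
    · refine ih q.2 hw.2 ?_ p hp
      intro v hv
      exact hnv v (by simpa using (List.mem_cons.2 (Or.inr hv)))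

lemma reach_closed {VS : Set G.V} {ES : Set G.E}
    (h1 : ∀ e ∈ ES, (G.ends e).1 ∈ VS ∧ (G.ends e).2 ∈ VS) {x y : G.V}
    (hx : x ∈ VS) (hreach : G.ReachableOn ES x y) : y ∈ VS := by
  induction hreach with
  | refl => exact hx
  | tail _ hstep ih =>
    obtain ⟨e, he, hse⟩ := hstep
    rcases hse with h | h
    · have := (h1 e he).2; rwa [h] at this
    · have := (h1 e he).1; rwa [h] at this

lemma exists_attached_edge {VS : Set G.V} {ES : Set G.E} (hG : G.TwoEdgeConnected)
    (r : G.V) (hr : r ∈ VS)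
    (h1 : ∀ e ∈ ES, (G.ends e).1 ∈ VS ∧ (G.ends e).2 ∈ VS)
    (hES : ES ≠ Set.univ) :
    ∃ g, g ∉ ES ∧ ((G.ends g).1 ∈ VS ∨ (G.ends g).2 ∈ VS) := by
  obtain ⟨g0, hg0⟩ := (Set.ne_univ_iff_exists_notMem ES).1 hES
  by_contra hcon
  push_neg at hcon
  have hclosed : ∀ e : G.E, (G.ends e).1 ∈ VS ∧ (G.ends e).2 ∈ VS ∨
      (G.ends e).1 ∉ VS ∧ (G.ends e).2 ∉ VS := by
    intro e
    by_cases he : e ∈ ES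
    · exact Or.inl (h1 e he)
    · exact Or.inr (hcon e he)
  have hall : ∀ y, G.ReachableOn Set.univ r y → y ∈ VS := by
    intro y hreach
    induction hreach with
    | refl => exact hr
    | tail _ hstep ih =>
      obtain ⟨e, _, hse⟩ := hstep
      rcases hclosed e with he | he
      · rcases hse with h | h <;> rw [h] at he
        · exact he.2
        · exact he.1
      · exfalso
        rcases hse with h | h <;> rw [h] at he
        · exact he.1 ih
        · exact he.2 ih
  have := hall (G.ends g0).1 (hG.2.1 r trivial _ trivial)
  exact (hcon g0 hg0).1 this

/-- The ear step: given a 2-edge-connected subgraph not containing all edges,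
produce an ear extending it. -/
lemma ear_step {VS : Set G.V} {ES : Set G.E} (hG : G.TwoEdgeConnected) (r : G.V)
    (h : G.TwoEdgeConnectedOn VS ES) (hr : r ∈ VS) (hES : ES ≠ Set.univ) :
    ∃ (a : G.V) (L : List (G.E × G.V)), a ∈ VS ∧ L ≠ [] ∧
      G.WalkFrom Set.univ a L ∧ G.endv a L ∈ VS ∧ (∀ p ∈ L, p.1 ∉ ES) ∧
      (L.map Prod.fst).Nodup ∧ ((a :: L.map Prod.snd).dropLast).Nodup ∧
      (∀ v ∈ (L.map Prod.snd).dropLast, v ∉ VS) ∧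
      G.TwoEdgeConnectedOn (VS ∪ {v | v ∈ L.map Prod.snd})
        (ES ∪ {f | f ∈ L.map Prod.fst}) := by
  obtain ⟨g, hg, hgVS⟩ := exists_attached_edge hG r hr h.1 hES
  have hreach0 : G.ReachableOn (Set.univ \ {g}) (G.ends g).1 (G.ends g).2 :=
    hG.2.2 g trivial
  obtain ⟨a, b, ha, hab, hba⟩ : ∃ a b, a ∈ VS ∧
      (G.ends g = (a, b) ∨ G.ends g = (b, a)) ∧ G.ReachableOn (Set.univ \ {g}) b a := by
    rcases hgVS with h1 | h2
    · exact ⟨(G.ends g).1, (G.ends g).2, h1, Or.inl rfl, reachableOn_symm hreach0⟩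
    · exact ⟨(G.ends g).2, (G.ends g).1, h2, Or.inr rfl, hreach0⟩
  obtain ⟨l0, hwl0, hendl0⟩ := reachableOn_iff_walk.1 hba
  obtain ⟨l', hw', hend', _, hnd', hne'⟩ :=
    ear_walk (VS := VS) l0 b hwl0 (hendl0 ▸ ha)
  set L := (g, b) :: l' with hL_def
  have hgnotl' : ∀ p ∈ l', p.1 ≠ g := by
    intro p hp
    have := walk_edges_mem l' b hw' p hp
    exact fun hpg => this.2 (by simp [hpg])
  have hwL : G.WalkFrom Set.univ a L :=
    ⟨⟨trivial, hab⟩, walkFrom_mono (fun _ _ => trivial) hw'⟩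
  have hnotES : ∀ p ∈ L, p.1 ∉ ES := by
    intro p hp
    rcases List.mem_cons.1 hp with rfl | hp
    · exact hg
    · exact walk_edges_notES h.1 l' b hw' hne' p hp
  have hEnodup : (L.map Prod.fst).Nodup := by
    simp only [hL_def, List.map_cons, List.nodup_cons]
    refine ⟨?_, walk_edges_nodup l' b hw' hnd'⟩
    intro hmem
    obtain ⟨q, hq, hq2⟩ := List.mem_map.1 hmem
    exact hgnotl' q hq hq2
  refine ⟨a, L, ha, by simp [hL_def], hwL, by simpa [hL_def] using hend', hnotES, hEnodup,
    ?_, ?_, ?_⟩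
  · show ((a :: b :: l'.map Prod.snd).dropLast).Nodup
    rw [List.dropLast_cons₂, List.nodup_cons]
    constructor
    · intro hmem
      exact hne' a hmem ha
    · exact hnd'.sublist (List.dropLast_sublist _)
  · show ∀ v ∈ ((b :: l'.map Prod.snd).dropLast), v ∉ VS
    exact hne'
  · exact extend_ear h a ha L hwL (by simpa [hL_def] using hend') hnotES hEnodup


lemma finish (hG : G.TwoEdgeConnected) (r : G.V) {VS : Set G.V} {ES : Set G.E}
    (h : G.TwoEdgeConnectedOn VS ES) (hr : r ∈ VS)
    (a : G.V) (ha : a ∈ VS) (L : List (G.E × G.V)) (hL : L ≠ [])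
    (hwL : G.WalkFrom Set.univ a L) (hend : G.endv a L ∈ VS)
    (hnotES : ∀ p ∈ L, p.1 ∉ ES) (hEnodup : (L.map Prod.fst).Nodup)
    (hsnd : ((a :: L.map Prod.snd).dropLast).Nodup)
    (hne : ∀ v ∈ (L.map Prod.snd).dropLast, v ∉ VS)
    (hU : ES ∪ {f | f ∈ L.map Prod.fst} = Set.univ) :
    ∃ (n : ℕ) (u : Fin (n + 2) → G.V) (e : Fin (n + 1) → G.E),
      (∀ i : Fin (n + 1),
        G.ends (e i) = (u i.castSucc, u i.succ) ∨
        G.ends (e i) = (u i.succ, u i.castSucc)) ∧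
      Function.Injective e ∧
      (∀ i : Fin (n + 2), 0 < i.val → i.val < n + 1 → G.degree (u i) = 2) ∧
      (∀ i : Fin (n + 2), 0 < i.val → i.val < n + 1 → u i ≠ r) ∧
      (∀ i j : Fin (n + 2), u i = u j →
        i = j ∨ (i.val = 0 ∧ j.val = n + 1) ∨ (j.val = 0 ∧ i.val = n + 1)) ∧
      G.TwoEdgeConnectedOn
        {x : G.V | ∀ i : Fin (n + 2), 0 < i.val → i.val < n + 1 → x ≠ u i}
        {f : G.E | ∀ i : Fin (n + 1), f ≠ e i} := by
  classical
  obtain ⟨n, hn⟩ : ∃ n, L.length = n + 1 :=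
    Nat.exists_eq_succ_of_ne_zero (by simpa using hL)
  have hlen1 : (L.map Prod.snd).length = n + 1 := by simp [hn]
  have hlen2 : (a :: L.map Prod.snd).length = n + 2 := by simp [hn]
  have hlen3 : (L.map Prod.fst).length = n + 1 := by simp [hn]
  set u : Fin (n + 2) → G.V :=
    (fun i => (a :: L.map Prod.snd)[i.val]'(by omega)) with hu_def
  set e : Fin (n + 1) → G.E :=
    (fun i => (L.map Prod.fst)[i.val]'(by omega)) with he_def
  -- adjacency
  have hadj : ∀ i : Fin (n + 1),
      G.ends (e i) = (u i.castSucc, u i.succ) ∨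
      G.ends (e i) = (u i.succ, u i.castSucc) := by
    intro i
    have hi : i.val < L.length := by omega
    have hwg := walk_getElem L a hwL i.val hi
    have he1 : e i = (L[i.val]'hi).1 := by
      simp [he_def]
    have hu1 : u i.castSucc = (a :: L.map Prod.snd)[i.val]'(by omega) := rfl
    have hu2 : u i.succ = (L[i.val]'hi).2 := by
      have : u i.succ = (a :: L.map Prod.snd)[i.val + 1]'(by omega) := rfl
      rw [this, hwg.2.1]
    rw [he1, hu1, hu2]
    exact hwg.2.2
  -- injectivity
  have he_inj : Function.Injective e := by
    intro i j hij
    simp only [he_def] at hij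
    have := (List.Nodup.getElem_inj_iff hEnodup).1 hij
    exact Fin.ext this
  -- last vertex of the walk is in VS
  have hlastVS : ∀ (hh : n + 1 < n + 2), u ⟨n + 1, hh⟩ ∈ VS := by
    intro hh
    rw [endv_getElem] at hend
    have : u ⟨n + 1, hh⟩ = (a :: L.map Prod.snd)[L.length]'(by simp) := by
      simp only [hu_def]
      congr 1
      omega
    rwa [this]
  -- internal vertices avoid VS
  have hinternal : ∀ i : Fin (n + 2), 0 < i.val → i.val < n + 1 → u i ∉ VS := by
    intro i h1 h2
    obtain ⟨k, hk⟩ : ∃ k, i.val = k + 1 := ⟨i.val - 1, by omega⟩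
    have hk2 : k < (L.map Prod.snd).dropLast.length := by
      simp [hn]; omega
    have hmem : u i ∈ (L.map Prod.snd).dropLast := by
      have h3 : u i = (L.map Prod.snd).dropLast[k]'hk2 := by
        rw [List.getElem_dropLast]
        simp only [hu_def]
        simp only [hk]
        simp
      rw [h3]
      exact List.getElem_mem _
    exact hne _ hmem
  -- distinctness
  have hdistinct : ∀ i j : Fin (n + 2), u i = u j →
      i = j ∨ (i.val = 0 ∧ j.val = n + 1) ∨ (j.val = 0 ∧ i.val = n + 1) := by
    have hsrc : ∀ (k : ℕ) (hk : k < n + 1),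
        (a :: L.map Prod.snd).dropLast[k]'(by simp [hn]; omega) =
          (a :: L.map Prod.snd)[k]'(by omega) := by
      intro k hk
      rw [List.getElem_dropLast]
    intro i j hij
    by_cases hi : i.val = n + 1 <;> by_cases hj : j.val = n + 1
    · exact Or.inl (Fin.ext (by omega))
    · -- u j = u i ∈ VS
      by_cases hj0 : j.val = 0
      · exact Or.inr (Or.inr ⟨hj0, hi⟩)
      · exfalso
        have hjVS : u j ∉ VS := hinternal j (by omega) (by omega)
        have : u i ∈ VS := by
          have : i = ⟨n + 1, by omega⟩ := Fin.ext hi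
          rw [this]; exact hlastVS _
        exact hjVS (hij ▸ this)
    · by_cases hi0 : i.val = 0
      · exact Or.inr (Or.inl ⟨hi0, hj⟩)
      · exfalso
        have hiVS : u i ∉ VS := hinternal i (by omega) (by omega)
        have : u j ∈ VS := by
          have : j = ⟨n + 1, by omega⟩ := Fin.ext hj
          rw [this]; exact hlastVS _
        exact hiVS (hij ▸ this)
    · -- both in the (nodup) sources
      left
      have h1 : (a :: L.map Prod.snd).dropLast[i.val]'(by simp [hn]; omega) =
          (a :: L.map Prod.snd).dropLast[j.val]'(by simp [hn]; omega) := by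
        rw [hsrc i.val (by omega), hsrc j.val (by omega)]
        exact hij
      exact Fin.ext ((List.Nodup.getElem_inj_iff hsnd).1 h1)
  -- degree of internal vertices
  have hdeg : ∀ i : Fin (n + 2), 0 < i.val → i.val < n + 1 → G.degree (u i) = 2 := by
    intro i h1 h2
    have hkey : ∀ j : Fin (n + 2), u j = u i → j = i := by
      intro j hj
      rcases hdistinct j i hj with hh | ⟨hh, hh'⟩ | ⟨hh, hh'⟩
      · exact hh
      · omega
      · omega
    have hia : i.val - 1 < n + 1 := by omega
    have hib : i.val < n + 1 := by omega
    set f1 := e ⟨i.val - 1, hia⟩ with hf1_def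
    set f2 := e ⟨i.val, hib⟩ with hf2_def
    have hf12 : f1 ≠ f2 := by
      intro hcon
      have := he_inj hcon
      have := Fin.val_eq_of_eq this
      simp at this
      omega
    have henotES : ∀ j : Fin (n + 1), e j ∉ ES := by
      intro j
      have : e j ∈ L.map Prod.fst := by
        simp only [he_def]
        exact List.getElem_mem _
      obtain ⟨p, hp, hp2⟩ := List.mem_map.1 this
      rw [← hp2]
      exact hnotES p hp
    have hwt : ∀ f : G.E,
        (if G.ends f = (u i, u i) then 2
         else if (G.ends f).1 = u i ∨ (G.ends f).2 = u i then 1 else 0) =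
        (if f = f1 then 1 else 0) + (if f = f2 then 1 else 0) := by
      intro f
      by_cases hfES : f ∈ ES
      · have hends := h.1 f hfES
        have hui : u i ∉ VS := hinternal i h1 h2
        rw [if_neg, if_neg, if_neg (fun hc : f = f1 => henotES _ (hc ▸ hfES)),
          if_neg (fun hc : f = f2 => henotES _ (hc ▸ hfES))]
        · rintro (hc | hc)
          · exact hui (hc ▸ hends.1)
          · exact hui (hc ▸ hends.2)
        · intro hc
          rw [hc] at hends
          exact hui hends.1
      · have hfL : f ∈ L.map Prod.fst := by
          have hfu : f ∈ ES ∪ {f | f ∈ L.map Prod.fst} := by rw [hU]; trivial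
          rcases hfu with hh | hh
          · exact absurd hh hfES
          · exact hh
        obtain ⟨jv, hjv, hjf⟩ := List.mem_iff_getElem.1 hfL
        have hjv' : jv < n + 1 := by omega
        set j : Fin (n + 1) := ⟨jv, hjv'⟩ with hj_def
        have hfj : f = e j := by
          simp only [he_def]
          exact hjf.symm
        have hcs : u j.castSucc = u i ↔ jv = i.val := by
          constructor
          · intro hh
            have := Fin.val_eq_of_eq (hkey _ hh)
            simpa using this
          · intro hh
            congr 1
            exact Fin.ext (by simpa using hh)
        have hsc : u j.succ = u i ↔ jv + 1 = i.val := by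
          constructor
          · intro hh
            have := Fin.val_eq_of_eq (hkey _ hh)
            simpa using this
          · intro hh
            congr 1
            exact Fin.ext (by simpa using hh)
        have hff1 : f = f1 ↔ jv = i.val - 1 := by
          rw [hfj, hf1_def]
          constructor
          · intro hh
            have := Fin.val_eq_of_eq (he_inj hh)
            simpa using this
          · intro hh
            congr 1
            exact Fin.ext (by simpa using hh)
        have hff2 : f = f2 ↔ jv = i.val := by
          rw [hfj, hf2_def]
          constructor
          · intro hh
            have := Fin.val_eq_of_eq (he_inj hh)
            simpa using this
          · intro hh
            congr 1
            exact Fin.ext (by simpa using hh)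
        have hends : G.ends f = (u j.castSucc, u j.succ) ∨
            G.ends f = (u j.succ, u j.castSucc) := by
          rw [hfj]; exact hadj j
        rcases Nat.lt_trichotomy (jv + 1) i.val with hcase | hcase | hcase
        · -- jv + 1 < i.val : neither endpoint is u i
          have hnc : u j.castSucc ≠ u i := fun hh => by have := hcs.1 hh; omega
          have hns : u j.succ ≠ u i := fun hh => by have := hsc.1 hh; omega
          have hne1 : G.ends f ≠ (u i, u i) := by
            rcases hends with hor | hor <;> rw [hor] <;> intro hc
            · exact hnc (congrArg Prod.fst hc)
            · exact hns (congrArg Prod.fst hc)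
          have hne2 : ¬((G.ends f).1 = u i ∨ (G.ends f).2 = u i) := by
            rcases hends with hor | hor <;> rw [hor] <;> rintro (hc | hc)
            · exact hnc hc
            · exact hns hc
            · exact hns hc
            · exact hnc hc
          rw [if_neg hne1, if_neg hne2, if_neg (fun hh => by have := hff1.1 hh; omega),
            if_neg (fun hh => by have := hff2.1 hh; omega)]
        · -- jv + 1 = i.val : f = f1
          have hcs' : u j.castSucc ≠ u i := fun hh => by have := hcs.1 hh; omega
          have hsc' : u j.succ = u i := hsc.2 hcase
          have hne1 : G.ends f ≠ (u i, u i) := by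
            rcases hends with hor | hor <;> rw [hor] <;> intro hc
            · exact hcs' (congrArg Prod.fst hc)
            · exact hcs' (congrArg Prod.snd hc)
          have hpos : (G.ends f).1 = u i ∨ (G.ends f).2 = u i := by
            rcases hends with hor | hor <;> rw [hor]
            · exact Or.inr hsc'
            · exact Or.inl hsc'
          rw [if_neg hne1, if_pos hpos, if_pos (hff1.2 (by omega)),
            if_neg (fun hh => by have := hff2.1 hh; omega)]
        · rcases Nat.lt_trichotomy jv i.val with hcase2 | hcase2 | hcase2
          · omega
          · -- jv = i.val : f = f2
            have hcs' : u j.castSucc = u i := hcs.2 hcase2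
            have hsc' : u j.succ ≠ u i := fun hh => by have := hsc.1 hh; omega
            have hne1 : G.ends f ≠ (u i, u i) := by
              rcases hends with hor | hor <;> rw [hor] <;> intro hc
              · exact hsc' (congrArg Prod.snd hc)
              · exact hsc' (congrArg Prod.fst hc)
            have hpos : (G.ends f).1 = u i ∨ (G.ends f).2 = u i := by
              rcases hends with hor | hor <;> rw [hor]
              · exact Or.inl hcs'
              · exact Or.inr hcs'
            rw [if_neg hne1, if_pos hpos, if_neg (fun hh => by have := hff1.1 hh; omega),
              if_pos (hff2.2 hcase2)]
          · -- jv > i.val : neither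
            have hnc : u j.castSucc ≠ u i := fun hh => by have := hcs.1 hh; omega
            have hns : u j.succ ≠ u i := fun hh => by have := hsc.1 hh; omega
            have hne1 : G.ends f ≠ (u i, u i) := by
              rcases hends with hor | hor <;> rw [hor] <;> intro hc
              · exact hnc (congrArg Prod.fst hc)
              · exact hns (congrArg Prod.fst hc)
            have hne2 : ¬((G.ends f).1 = u i ∨ (G.ends f).2 = u i) := by
              rcases hends with hor | hor <;> rw [hor] <;> rintro (hc | hc)
              · exact hnc hc
              · exact hns hc
              · exact hns hc
              · exact hnc hc
            rw [if_neg hne1, if_neg hne2, if_neg (fun hh => by have := hff1.1 hh; omega),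
              if_neg (fun hh => by have := hff2.1 hh; omega)]
    calc G.degree (u i) = ∑ f : G.E, ((if f = f1 then 1 else 0) + (if f = f2 then 1 else 0)) :=
          Finset.sum_congr rfl (fun f _ => hwt f)
      _ = 2 := by
          rw [Finset.sum_add_distrib]
          simp [Finset.sum_ite_eq']
  -- avoid the root
  have hroot : ∀ i : Fin (n + 2), 0 < i.val → i.val < n + 1 → u i ≠ r := by
    intro i h1 h2 hir
    exact hinternal i h1 h2 (hir ▸ hr)
  -- set equalities for the remainder
  have hVU : VS ∪ {v | v ∈ L.map Prod.snd} = Set.univ := by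
    ext v
    simp only [Set.mem_univ, iff_true]
    have hreach : G.ReachableOn (ES ∪ {f | f ∈ L.map Prod.fst}) r v := by
      rw [hU]
      exact hG.2.1 r trivial v trivial
    have hTE := extend_ear h a ha L hwL hend hnotES hEnodup
    exact reach_closed hTE.1 (Or.inl hr) hreach
  have hVSeq : {x : G.V | ∀ i : Fin (n + 2), 0 < i.val → i.val < n + 1 → x ≠ u i} = VS := by
    ext x
    simp only [Set.mem_setOf_eq]
    constructor
    · intro hx
      have hxu : x ∈ VS ∪ {v | v ∈ L.map Prod.snd} := by rw [hVU]; trivial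
      rcases hxu with hh | hh
      · exact hh
      · obtain ⟨jv, hjv, hjx⟩ := List.mem_iff_getElem.1 hh
        have hjv' : jv < n + 1 := by omega
        have hxj : x = u ⟨jv + 1, by omega⟩ := by
          simp only [hu_def]
          rw [← hjx]
          simp
        by_cases hlast : jv + 1 = n + 1
        · rw [hxj]
          have : (⟨jv + 1, by omega⟩ : Fin (n + 2)) = ⟨n + 1, by omega⟩ :=
            Fin.ext (by show jv + 1 = n + 1; omega)
          rw [this]
          exact hlastVS _
        · refine absurd hxj (hx ⟨jv + 1, by omega⟩ ?_ ?_)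
          · show 0 < jv + 1; omega
          · show jv + 1 < n + 1; omega
    · intro hx i h1 h2 hxu
      exact hinternal i h1 h2 (hxu ▸ hx)
  have hESeq : {f : G.E | ∀ i : Fin (n + 1), f ≠ e i} = ES := by
    ext f
    simp only [Set.mem_setOf_eq]
    constructor
    · intro hf
      have hfu : f ∈ ES ∪ {f | f ∈ L.map Prod.fst} := by rw [hU]; trivial
      rcases hfu with hh | hh
      · exact hh
      · obtain ⟨jv, hjv, hjf⟩ := List.mem_iff_getElem.1 hh
        exact absurd hjf.symm (hf ⟨jv, by simpa [hlen3] using hjv⟩)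
    · intro hf i hfe
      have : e i ∈ L.map Prod.fst := by
        simp only [he_def]
        exact List.getElem_mem _
      obtain ⟨p, hp, hp2⟩ := List.mem_map.1 this
      exact hnotES p hp (hp2 ▸ hfe ▸ hf)
  refine ⟨n, u, e, hadj, he_inj, hdeg, hroot, hdistinct, ?_⟩
  rw [hVSeq, hESeq]
  exact h

end Multigraph

/-- Every 2-edge-connected multigraph with at least 2 vertices and a distinguished
root vertex contains a path `π = (u 0, …, u (n+1))` (so of length `k = n + 2 ≥ 2`)
whose internal vertices have degree 2 in the graph, avoid the root, and whose
vertices are pairwise distinct except possibly the two endpoints; moreover,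
removing the internal vertices and the edges of `π` leaves a 2-edge-connected
graph. -/
theorem Multigraph.ear_decomposition (G : Multigraph) (r : G.V)
    (hcard : 2 ≤ Fintype.card G.V) (hG : G.TwoEdgeConnected) :
    ∃ (n : ℕ) (u : Fin (n + 2) → G.V) (e : Fin (n + 1) → G.E),
      (∀ i : Fin (n + 1),
        G.ends (e i) = (u i.castSucc, u i.succ) ∨
        G.ends (e i) = (u i.succ, u i.castSucc)) ∧
      Function.Injective e ∧
      (∀ i : Fin (n + 2), 0 < i.val → i.val < n + 1 → G.degree (u i) = 2) ∧
      (∀ i : Fin (n + 2), 0 < i.val → i.val < n + 1 → u i ≠ r) ∧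
      (∀ i j : Fin (n + 2), u i = u j →
        i = j ∨ (i.val = 0 ∧ j.val = n + 1) ∨ (j.val = 0 ∧ i.val = n + 1)) ∧
      G.TwoEdgeConnectedOn
        {x : G.V | ∀ i : Fin (n + 2), 0 < i.val → i.val < n + 1 → x ≠ u i}
        {f : G.E | ∀ i : Fin (n + 1), f ≠ e i} := by
  classical
  have hEne : Nonempty G.E := by
    obtain ⟨v, hv⟩ := Fintype.exists_ne_of_one_lt_card (by omega) r
    have hreach := hG.2.1 r trivial v trivial
    rcases Relation.ReflTransGen.cases_head hreach with heq | ⟨c, hrel, _⟩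
    · exact absurd heq.symm hv
    · obtain ⟨e, _, _⟩ := hrel
      exact ⟨e⟩
  have hbase : G.TwoEdgeConnectedOn {r} (∅ : Set G.E) := by
    refine ⟨by simp, ?_, by simp⟩
    intro x hx y hy
    simp only [Set.mem_singleton_iff] at hx hy
    subst hx; subst hy
    exact Relation.ReflTransGen.refl
  have hMain : ∀ (k : ℕ) (VS : Set G.V) (ES : Set G.E), (ESᶜ).ncard ≤ k →
      G.TwoEdgeConnectedOn VS ES → r ∈ VS → ES ≠ Set.univ →
      ∃ (n : ℕ) (u : Fin (n + 2) → G.V) (e : Fin (n + 1) → G.E),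
      (∀ i : Fin (n + 1),
        G.ends (e i) = (u i.castSucc, u i.succ) ∨
        G.ends (e i) = (u i.succ, u i.castSucc)) ∧
      Function.Injective e ∧
      (∀ i : Fin (n + 2), 0 < i.val → i.val < n + 1 → G.degree (u i) = 2) ∧
      (∀ i : Fin (n + 2), 0 < i.val → i.val < n + 1 → u i ≠ r) ∧
      (∀ i j : Fin (n + 2), u i = u j →
        i = j ∨ (i.val = 0 ∧ j.val = n + 1) ∨ (j.val = 0 ∧ i.val = n + 1)) ∧
      G.TwoEdgeConnectedOn
        {x : G.V | ∀ i : Fin (n + 2), 0 < i.val → i.val < n + 1 → x ≠ u i}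
        {f : G.E | ∀ i : Fin (n + 1), f ≠ e i} := by
    intro k
    induction k with
    | zero =>
      intro VS ES hk _ _ hES
      exfalso
      have h0 : (ESᶜ).ncard = 0 := Nat.le_zero.1 hk
      have : ESᶜ = ∅ := (Set.ncard_eq_zero (Set.toFinite _)).1 h0
      exact hES (Set.compl_empty_iff.1 this)
    | succ k ih =>
      intro VS ES hk h hr hES
      obtain ⟨a, L, ha, hL, hwL, hend, hnotES, hEnodup, hsnd, hne, hTE⟩ :=
        G.ear_step hG r h hr hES
      by_cases hU : ES ∪ {f | f ∈ L.map Prod.fst} = Set.univ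
      · exact G.finish hG r h hr a ha L hL hwL hend hnotES hEnodup hsnd hne hU
      · refine ih _ _ ?_ hTE (Or.inl hr) hU
        obtain ⟨p, hp⟩ := List.exists_mem_of_ne_nil L hL
        have hsub : (ES ∪ {f | f ∈ L.map Prod.fst})ᶜ ⊆ ESᶜ :=
          Set.compl_subset_compl.2 Set.subset_union_left
        have hssub : (ES ∪ {f | f ∈ L.map Prod.fst})ᶜ ⊂ ESᶜ := by
          refine (Set.ssubset_iff_of_subset hsub).2 ⟨p.1, hnotES p hp, ?_⟩
          intro hcon
          exact hcon (Or.inr (List.mem_map.2 ⟨p, hp, rfl⟩))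
        have := Set.ncard_lt_ncard hssub (Set.toFinite _)
        omega
  exact hMain ((∅ᶜ : Set G.E)).ncard {r} ∅ le_rfl hbase rfl (Set.empty_ne_univ)
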